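/- arXiv:1810.04723 — 2 statements merged into one kernel-verified Lean document; each statement's English description precedes it below -/
import Mathlib

section
/- Let μ > 0, L > 0, N > 0 and let (Y_t) satisfy Y_{t+1} ≤ (1 − μη_t)Y_t + η_t²N with η_t = 2/(μt + 4L) ≤ 1/(2L) for all t ≥ 0. Then for all t ≥ T' := (4L/μ)max{LμY_0/N, 1} − 4L/μ, Y_t ≤ (16N/μ)·1/(μ(t − T') + 4L). -/
set_option maxHeartbeats 1000000


theorem sgd_upper_bound (μ L N : ℝ) (hμ : 0 < μ) (hL : 0 < L) (hN : 0 < N)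
    (Y : ℕ → ℝ) (hYnonneg : ∀ t, 0 ≤ Y t)
    (η : ℕ → ℝ) (hη : ∀ t : ℕ, η t = 2 / (μ * t + 4 * L))
    (hηL : ∀ t, η t ≤ 1 / (2 * L))
    (hrec : ∀ t, Y (t + 1) ≤ (1 - μ * η t) * Y t + (η t) ^ 2 * N) :
    ∀ t : ℕ,
      (4 * L / μ) * max (L * μ * Y 0 / N) 1 - 4 * L / μ ≤ (t : ℝ) →
      Y t ≤ (16 * N / μ) *
        (1 / (μ * ((t : ℝ) - ((4 * L / μ) * max (L * μ * Y 0 / N) 1 - 4 * L / μ))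
          + 4 * L)) := by
  intro t ht
  set Mx := max (L * μ * Y 0 / N) 1 with hMxdef
  have hM1 : (1 : ℝ) ≤ Mx := le_max_right _ _
  have hMY : L * μ * Y 0 / N ≤ Mx := le_max_left _ _
  have hY0 : μ * Y 0 * L ≤ N * Mx := by
    have h := (div_le_iff₀ hN).mp hMY
    nlinarith [h]
  set Δ := 4 * L * (Mx - 1) with hΔdef
  clear_value Mx Δ
  have hΔ0 : (0 : ℝ) ≤ Δ := by nlinarith [hM1, hL.le]
  have hT : (4 * L / μ) * Mx - 4 * L / μ = Δ / μ := by
    rw [hΔdef]; field_simp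
  have htΔ : Δ ≤ μ * (t : ℝ) := by
    rw [hT, div_le_iff₀ hμ] at ht
    linarith
  have hb : μ * ((t : ℝ) - ((4 * L / μ) * Mx - 4 * L / μ)) + 4 * L
      = μ * (t : ℝ) + 4 * L - Δ := by
    rw [hT, hΔdef]; field_simp; ring
  rw [hb]
  have hbpos : (0 : ℝ) < μ * (t : ℝ) + 4 * L - Δ := by linarith
  rw [div_mul_div_comm, mul_one, le_div_iff₀ (mul_pos hμ hbpos)]
  -- Goal: Y t * (μ * (μ * t + 4 * L - Δ)) ≤ 16 * N
  -- basic tools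
  have hpoly : ∀ s : ℕ, Y (s + 1) * (μ * (s : ℝ) + 4 * L) ^ 2 ≤
      (μ * (s : ℝ) + 4 * L) * ((μ * (s : ℝ) + 4 * L) - 2 * μ) * Y s + 4 * N := by
    intro s
    have hA : (0 : ℝ) < μ * (s : ℝ) + 4 * L := by positivity
    have h := hrec s
    rw [hη s] at h
    have heq : (1 - μ * (2 / (μ * (s : ℝ) + 4 * L))) * Y s
          + (2 / (μ * (s : ℝ) + 4 * L)) ^ 2 * N
        = ((μ * (s : ℝ) + 4 * L) * ((μ * (s : ℝ) + 4 * L) - 2 * μ) * Y s + 4 * N)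
            / (μ * (s : ℝ) + 4 * L) ^ 2 := by
      field_simp
      ring
    rw [heq] at h
    exact (le_div_iff₀ (by positivity)).mp h
  -- the inductive step of the invariant
  have hstep : ∀ s : ℕ, 2 * μ ≤ μ * (s : ℝ) + 4 * L →
      Y s * (μ * (s : ℝ) + 4 * L) ^ 2 * μ ≤ 4 * N * (μ * (s : ℝ) + 4 * L + 3 * Δ + 3 * μ) →
      Y (s + 1) * ((μ * (s : ℝ) + 4 * L) + μ) ^ 2 * μ ≤
        4 * N * ((μ * (s : ℝ) + 4 * L) + μ + 3 * Δ + 3 * μ) := by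
    intro s hs hPs
    have hA : (0 : ℝ) < μ * (s : ℝ) + 4 * L := by positivity
    set A := μ * (s : ℝ) + 4 * L with hAdef
    have hτ : (0 : ℝ) ≤ A - 2 * μ := by linarith
    have h1 := hpoly s
    rw [← hAdef] at h1
    have halg : ((A - 2 * μ) * (A + 3 * Δ + 3 * μ) + μ * A) * (A + μ) ^ 2
        ≤ A ^ 3 * (A + μ + 3 * Δ + 3 * μ) := by
      nlinarith [mul_nonneg (mul_nonneg (mul_nonneg hτ hτ) hμ.le) hμ.le,
        mul_nonneg (mul_nonneg (mul_nonneg hτ hμ.le) hμ.le) hμ.le,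
        mul_nonneg (mul_nonneg (mul_nonneg hτ hμ.le) hμ.le) hΔ0,
        mul_nonneg (mul_nonneg (mul_nonneg hμ.le hμ.le) hμ.le) hμ.le,
        mul_nonneg (mul_nonneg (mul_nonneg hμ.le hμ.le) hμ.le) hΔ0]
    have key : (Y (s + 1) * (A + μ) ^ 2 * μ) * A ^ 3
        ≤ (4 * N * (A + μ + 3 * Δ + 3 * μ)) * A ^ 3 := by
      linarith [mul_le_mul_of_nonneg_left h1
          (show (0 : ℝ) ≤ μ * (A + μ) ^ 2 * A from
            mul_nonneg (mul_nonneg hμ.le (sq_nonneg _)) hA.le),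
        mul_le_mul_of_nonneg_left hPs (mul_nonneg hτ (sq_nonneg (A + μ))),
        mul_le_mul_of_nonneg_left halg (show (0 : ℝ) ≤ 4 * N by linarith)]
    exact le_of_mul_le_mul_right key (pow_pos hA 3)
  -- base cases of the invariant
  have hP0 : Y 0 * (4 * L) ^ 2 * μ ≤ 4 * N * (4 * L + 3 * Δ + 3 * μ) := by
    nlinarith [hY0, hM1, hΔdef,
      mul_nonneg (mul_nonneg hL.le hN.le) (sub_nonneg.mpr hM1),
      mul_nonneg hN.le hμ.le]
  have hP1 : μ ≤ 4 * L →
      Y 1 * (μ + 4 * L) ^ 2 * μ ≤ 4 * N * (μ + 4 * L + 3 * Δ + 3 * μ) := by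
    intro h4
    rcases le_or_gt (2 * μ) (4 * L) with hc | hc
    · have h := hstep 0 (by push_cast; linarith) (by push_cast; linarith [hP0])
      push_cast at h
      nlinarith [h]
    · have h1 := hpoly 0
      push_cast at h1
      have hd : Y 1 * (16 * L ^ 2) ≤ 4 * N := by
        nlinarith [h1, mul_nonneg (mul_nonneg hL.le
          (show (0 : ℝ) ≤ 2 * μ - 4 * L by linarith)) (hYnonneg 0)]
      have hs0 : (0 : ℝ) ≤ 4 * L - μ := by linarith
      have hs2 : 4 * L - μ ≤ 2 * L := by linarith
      have hineq : μ * (μ + 4 * L) ^ 2 ≤ 16 * L ^ 2 * (4 * L + 4 * μ + 3 * Δ) := by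
        nlinarith [mul_le_mul_of_nonneg_left hs2 (mul_nonneg hL.le hs0),
          mul_nonneg (mul_nonneg hs0 hs0) hs0,
          mul_nonneg (mul_nonneg hL.le hL.le) hs0,
          mul_pos (mul_pos hL hL) hL,
          mul_nonneg (mul_nonneg hL.le hL.le) hΔ0]
      have key : (Y 1 * (μ + 4 * L) ^ 2 * μ) * (16 * L ^ 2)
          ≤ (4 * N * (μ + 4 * L + 3 * Δ + 3 * μ)) * (16 * L ^ 2) := by
        linarith [mul_le_mul_of_nonneg_left hd
            (mul_nonneg hμ.le (sq_nonneg (μ + 4 * L))),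
          mul_le_mul_of_nonneg_left hineq (show (0 : ℝ) ≤ 4 * N by linarith)]
      exact le_of_mul_le_mul_right key (by nlinarith [pow_pos hL 2])
  have hP2 : Y 2 * (μ * 2 + 4 * L) ^ 2 * μ ≤ 4 * N * (μ * 2 + 4 * L + 3 * Δ + 3 * μ) := by
    rcases le_or_gt μ (4 * L) with h4 | h4
    · have h := hstep 1 (by push_cast; linarith) (by push_cast; linarith [hP1 h4])
      push_cast at h
      nlinarith [h]
    · have h1 := hpoly 1
      push_cast at h1
      have hd2 : Y 2 * ((μ + 4 * L) ^ 2) ≤ 4 * N := by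
        nlinarith [h1, mul_nonneg (mul_nonneg
          (show (0 : ℝ) ≤ μ + 4 * L by linarith)
          (show (0 : ℝ) ≤ μ - 4 * L by linarith)) (hYnonneg 1)]
      have hineq2 : μ * (μ * 2 + 4 * L) ^ 2
          ≤ (μ + 4 * L) ^ 2 * (μ * 2 + 4 * L + 3 * Δ + 3 * μ) := by
        nlinarith [mul_nonneg (mul_nonneg hμ.le hμ.le) hΔ0,
          mul_nonneg (mul_nonneg hμ.le hL.le) hΔ0,
          mul_nonneg (mul_nonneg hL.le hL.le) hΔ0,
          mul_pos (mul_pos hμ hμ) hμ,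
          mul_pos (mul_pos hL hμ) hμ,
          mul_pos (mul_pos hL hL) hμ,
          mul_pos (mul_pos hL hL) hL]
      have key : (Y 2 * (μ * 2 + 4 * L) ^ 2 * μ) * ((μ + 4 * L) ^ 2)
          ≤ (4 * N * (μ * 2 + 4 * L + 3 * Δ + 3 * μ)) * ((μ + 4 * L) ^ 2) := by
        linarith [mul_le_mul_of_nonneg_left hd2
            (mul_nonneg hμ.le (sq_nonneg (μ * 2 + 4 * L))),
          mul_le_mul_of_nonneg_left hineq2 (show (0 : ℝ) ≤ 4 * N by linarith)]
      exact le_of_mul_le_mul_right key (pow_pos (by linarith : (0:ℝ) < μ + 4 * L) 2)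
  -- invariant for all s ≥ 2
  have hPall : ∀ s : ℕ, 2 ≤ s →
      Y s * (μ * (s : ℝ) + 4 * L) ^ 2 * μ ≤ 4 * N * (μ * (s : ℝ) + 4 * L + 3 * Δ + 3 * μ) := by
    intro s hs
    induction s, hs using Nat.le_induction with
    | base => push_cast; linarith [hP2]
    | succ n hn ih =>
      have hn2 : (2 : ℝ) ≤ (n : ℝ) := by exact_mod_cast hn
      have hc : 2 * μ ≤ μ * (n : ℝ) + 4 * L := by
        nlinarith [mul_nonneg hμ.le (show (0 : ℝ) ≤ (n : ℝ) - 2 by linarith)]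
      have h := hstep n hc ih
      push_cast
      nlinarith [h]
  -- transfer from the invariant to the goal
  have hfinal : ∀ s : ℕ, (1 : ℝ) ≤ (s : ℝ) → Δ ≤ μ * (s : ℝ) →
      Y s * (μ * (s : ℝ) + 4 * L) ^ 2 * μ ≤ 4 * N * (μ * (s : ℝ) + 4 * L + 3 * Δ + 3 * μ) →
      Y s * (μ * (μ * (s : ℝ) + 4 * L - Δ)) ≤ 16 * N := by
    intro s hs1 hsΔ hPs
    have hA : (0 : ℝ) < μ * (s : ℝ) + 4 * L := by positivity
    have hA1 : μ ≤ μ * (s : ℝ) + 4 * L := by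
      nlinarith [mul_nonneg hμ.le (show (0 : ℝ) ≤ (s : ℝ) - 1 by linarith)]
    have hbp : (0 : ℝ) ≤ μ * (s : ℝ) + 4 * L - Δ := by linarith
    have h4 : (μ * (s : ℝ) + 4 * L - Δ) * ((μ * (s : ℝ) + 4 * L) + 3 * Δ + 3 * μ)
        ≤ 4 * (μ * (s : ℝ) + 4 * L) ^ 2 := by
      nlinarith [mul_nonneg (sub_nonneg.mpr hA1) hbp,
        mul_nonneg hΔ0 hΔ0, mul_nonneg hA.le hΔ0]
    have key : (Y s * (μ * (μ * (s : ℝ) + 4 * L - Δ))) * ((μ * (s : ℝ) + 4 * L) ^ 2)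
        ≤ (16 * N) * ((μ * (s : ℝ) + 4 * L) ^ 2) := by
      linarith [mul_le_mul_of_nonneg_left hPs hbp,
        mul_le_mul_of_nonneg_left h4 (show (0 : ℝ) ≤ 4 * N by linarith)]
    exact le_of_mul_le_mul_right key (pow_pos hA 2)
  rcases Nat.lt_or_ge t 2 with h2 | h2
  swap
  · -- t = s + 2 (handled first via swap): t = 2 + s
    obtain ⟨s, rfl⟩ := Nat.exists_eq_add_of_le h2
    exact hfinal (2 + s) (by push_cast; linarith [Nat.cast_nonneg (α := ℝ) s]) htΔ
      (hPall (2 + s) (by omega))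
  obtain rfl | rfl : t = 0 ∨ t = 1 := by omega
  · -- t = 0
    push_cast at htΔ ⊢
    have h0 : Δ ≤ 0 := by linarith
    have hMx1 : Mx ≤ 1 := by
      by_contra hcon
      push_neg at hcon
      nlinarith [mul_pos hL (show (0 : ℝ) < Mx - 1 by linarith)]
    have hY0' : μ * Y 0 * L ≤ N := by
      nlinarith [hY0, mul_nonneg hN.le (show (0 : ℝ) ≤ 1 - Mx by linarith)]
    nlinarith [hY0', hYnonneg 0, h0, hΔ0, mul_nonneg hμ.le (hYnonneg 0),
      mul_nonneg (mul_nonneg hμ.le (hYnonneg 0)) hΔ0]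
  · -- t = 1
    rcases le_or_gt μ (4 * L) with h4 | h4
    · exact hfinal 1 (by norm_num) htΔ (by push_cast; linarith [hP1 h4])
    · push_cast at htΔ ⊢
      have h1 := hpoly 0
      push_cast at h1
      have hd : Y 1 * (16 * L ^ 2) ≤ 4 * N := by
        nlinarith [h1, mul_nonneg (mul_nonneg hL.le
          (show (0 : ℝ) ≤ 2 * μ - 4 * L by linarith)) (hYnonneg 0)]
      rcases le_or_gt (μ * (μ + 4 * L)) (64 * L ^ 2) with h64 | h64
      · have hbp1 : (0 : ℝ) ≤ μ * (μ * 1 + 4 * L - Δ) :=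
          mul_nonneg hμ.le (by linarith)
        have hbb : μ * (μ * 1 + 4 * L - Δ) ≤ 64 * L ^ 2 := by
          linarith [mul_nonneg hμ.le hΔ0, h64]
        have key : (Y 1 * (μ * (μ * 1 + 4 * L - Δ))) * (16 * L ^ 2)
            ≤ (16 * N) * (16 * L ^ 2) := by
          linarith [mul_le_mul_of_nonneg_left hd hbp1,
            mul_le_mul_of_nonneg_left hbb (show (0 : ℝ) ≤ 4 * N by linarith)]
        exact le_of_mul_le_mul_right key (by nlinarith [pow_pos hL 2])
      · have h2 := hpoly 1
        push_cast at h2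
        have hF : (μ - 4 * L) * ((μ + 4 * L) * Y 1) ≤ 4 * N := by
          nlinarith [h2, mul_nonneg (hYnonneg 2) (sq_nonneg (μ * 1 + 4 * L))]
        have h3μ : 16 * L ≤ 3 * μ := by
          by_contra hcon
          push_neg at hcon
          nlinarith [h64, mul_pos hμ hL, mul_pos hL hL,
            mul_lt_mul_of_pos_left hcon hμ, mul_lt_mul_of_pos_right hcon hL]
        linarith [hF, hYnonneg 1,
          mul_nonneg (show (0 : ℝ) ≤ 3 * μ - 16 * L by linarith)
            (mul_nonneg (show (0 : ℝ) ≤ μ + 4 * L by linarith) (hYnonneg 1)),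
          mul_nonneg (mul_nonneg hμ.le hΔ0) (hYnonneg 1)]
end

section
/- If F: ℝ^d → ℝ is differentiable, μ-strongly convex with minimizer w*, and for all w, E[‖∇f(w;ξ)‖²] ≤ σ² with ∇F(w) = E[∇f(w;ξ)] and σ < ∞, then a contradiction arises: F(w) ≤ σ²/(2μ) + F(w*) for all w, while F(w) ≥ (μ/2)‖w − w*‖² + F(w*), so no such F exists on all of ℝ^d with bounded stochastic gradients. -/
open MeasureTheory
open scoped RealInnerProductSpace

theorem no_bounded_gradient_strongly_convex {d : ℕ} (hd : 0 < d)
    {Ω : Type*} [MeasurableSpace Ω] (P : Measure Ω) [IsProbabilityMeasure P]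
    (F : EuclideanSpace ℝ (Fin d) → ℝ)
    (G : EuclideanSpace ℝ (Fin d) → EuclideanSpace ℝ (Fin d))
    (g : EuclideanSpace ℝ (Fin d) → Ω → EuclideanSpace ℝ (Fin d))
    (μ σ : ℝ) (hμ : 0 < μ)
    (hgrad : ∀ w, HasGradientAt F (G w) w)
    (hsc : ∀ w w', F w - F w' ≥ ⟪G w', w - w'⟫ + μ / 2 * ‖w - w'‖ ^ 2)
    (wstar : EuclideanSpace ℝ (Fin d)) (hmin : ∀ w, F wstar ≤ F w)
    (hmem : ∀ w, MemLp (g w) 2 P)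
    (hexp : ∀ w, ∫ ω, g w ω ∂P = G w)
    (hbdd : ∀ w, ∫ ω, ‖g w ω‖ ^ 2 ∂P ≤ σ ^ 2) :
    False := by
  -- Step 1: ‖G w‖ ≤ |σ| for all w
  have hGbdd : ∀ w, ‖G w‖ ≤ |σ| := by
    intro w
    have hnormmem : MemLp (fun ω => ‖g w ω‖) 2 P := (hmem w).norm
    have hvar := ProbabilityTheory.variance_nonneg (fun ω => ‖g w ω‖) P
    have hvdef := ProbabilityTheory.variance_eq_sub hnormmem
    have h1 : (∫ ω, ‖g w ω‖ ∂P) ^ 2 ≤ ∫ ω, ‖g w ω‖ ^ 2 ∂P := by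
      have := hvdef ▸ hvar
      simp only [Pi.pow_apply] at this
      linarith
    have h2 : ‖G w‖ ≤ ∫ ω, ‖g w ω‖ ∂P := by
      rw [← hexp w]; exact norm_integral_le_integral_norm _
    have h3 : (∫ ω, ‖g w ω‖ ∂P) ^ 2 ≤ σ ^ 2 := h1.trans (hbdd w)
    have h4 : ∫ ω, ‖g w ω‖ ∂P ≤ |σ| := by
      nlinarith [abs_nonneg σ, integral_nonneg (μ := P) (f := fun ω => ‖g w ω‖) (fun ω => norm_nonneg (g w ω)),
        sq_abs σ]
    linarith
  -- Step 2: strong convexity forces ‖G w‖ ≥ μ/2 ‖w - wstar‖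
  set t : ℝ := (2 * |σ| + 2) / μ with ht
  have htpos : 0 < t := by positivity
  obtain ⟨i⟩ : Nonempty (Fin d) := ⟨⟨0, hd⟩⟩
  set v : EuclideanSpace ℝ (Fin d) := EuclideanSpace.single i (1 : ℝ) with hv
  have hvnorm : ‖v‖ = 1 := by simp [hv]
  set w : EuclideanSpace ℝ (Fin d) := wstar + t • v with hw
  have hdiff : w - wstar = t • v := by simp [hw]
  have hwnorm : ‖w - wstar‖ = t := by
    rw [hdiff, norm_smul, hvnorm, Real.norm_eq_abs, abs_of_pos htpos, mul_one]
  have hkey := hsc wstar w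
  have hmin' := hmin w
  have hinner : ⟪G w, wstar - w⟫ + μ / 2 * ‖wstar - w‖ ^ 2 ≤ 0 := by linarith
  have hswap : ‖wstar - w‖ = ‖w - wstar‖ := by rw [norm_sub_rev]
  have hcs : ⟪G w, w - wstar⟫ ≤ ‖G w‖ * ‖w - wstar‖ :=
    real_inner_le_norm _ _
  have hsub : ⟪G w, wstar - w⟫ = -⟪G w, w - wstar⟫ := by
    rw [← inner_neg_right]; congr 1; abel
  have hlow : μ / 2 * ‖w - wstar‖ ^ 2 ≤ ‖G w‖ * ‖w - wstar‖ := by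
    rw [hswap, hsub] at hinner; linarith
  rw [hwnorm] at hlow
  have hG := hGbdd w
  have : μ / 2 * t ^ 2 ≤ |σ| * t := le_trans hlow (by nlinarith)
  have ht2 : μ / 2 * t ≤ |σ| := by
    have := (mul_le_mul_iff_of_pos_right htpos).mp (by nlinarith : (μ / 2 * t) * t ≤ |σ| * t)
    linarith
  rw [ht] at ht2
  have : μ / 2 * ((2 * |σ| + 2) / μ) = |σ| + 1 := by field_simp
  linarith
end
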